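/- Let F_q be a finite field, E a field extension of F_q of degree m, and ρ : E → Mat_{m×m}(F_q) the regular representation sending a ∈ E to the matrix (with respect to a fixed F_q-basis of E) of multiplication by a; ρ is an injective F_q-linear map. Let n₁, n₂ be positive integers with n₁n₂ = n and let Φ₂ : E^n → (n₁m × n₂m matrices over F_q) be the two-dimensional expansion that writes a vector row-wise into an n₁ × n₂ array of E-symbols and replaces each symbol a by the m × m matrix ρ(a). Let 0 < k < n, assume ⌊√(⌊(n−k)/2⌋)⌋ ≥ 1, and let C ⊆ E^n have minimum Hamming distance at least n−k+1. Set x = m·(⌊√(⌊(n−k)/2⌋)⌋ − 1) + 1. Then Φ₂(C) corrects any single square burst of side at most x: for all c, c′ ∈ C and all n₁m × n₂m matrices e, e′ over F_q whose supports are each contained in some x × x square of contiguous rows and columns, Φ₂(c) + e = Φ₂(c′) + e′ implies c = c′. -/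

import Mathlib

/-- The linear (row-major) index of position `j` in the `i`-th block of length `m`. -/
def finIdx {n m : ℕ} (i : Fin n) (j : Fin m) : Fin (n * m) :=
  ⟨i.1 * m + j.1, by
    have h1 : i.1 + 1 ≤ n := i.2
    have h2 : j.1 < m := j.2
    calc i.1 * m + j.1 < (i.1 + 1) * m := by nlinarith
      _ ≤ n * m := Nat.mul_le_mul_right m h1⟩

/-- A square burst of side (at most) `x`: a matrix whose support is contained in
some `x × x` square of contiguous rows and columns. -/
def IsSquareBurst {F : Type*} [Zero F] {R C : ℕ} (x : ℕ) (e : Matrix (Fin R) (Fin C) F) : Prop :=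
  ∃ p q : ℕ, ∀ i j, e i j ≠ 0 →
    p ≤ (i : ℕ) ∧ (i : ℕ) < p + x ∧ q ≤ (j : ℕ) ∧ (j : ℕ) < q + x

/-- Block-index bound: if a coordinate in block `r` lies in the burst window. -/
lemma blockBound {m p s r u : ℕ} (hm : 0 < m) (hu : u < m)
    (h1 : p ≤ r * m + u) (h2 : r * m + u < p + (m * (s - 1) + 1)) :
    p / m ≤ r ∧ r ≤ p / m + (s - 1) := by
  constructor
  · have hlt : p < (r + 1) * m := by
      calc p ≤ r * m + u := h1
        _ < r * m + m := by omega
        _ = (r + 1) * m := by ring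
    have := (Nat.div_lt_iff_lt_mul hm).2 (by rw [Nat.mul_comm] at hlt ⊢; exact hlt)
    omega
  · have hle : r * m ≤ p + m * (s - 1) := by omega
    have := (Nat.le_div_iff_mul_le hm).2 hle
    rwa [Nat.add_mul_div_left _ _ hm] at this

/-- Cardinality of the set of positions hit by a single burst window. -/
lemma burstCard (n n₁ n₂ s : ℕ) (hn : n₁ * n₂ = n) (a c : ℕ) (hs : 1 ≤ s) :
    (Finset.univ.filter (fun t : Fin n =>
      a ≤ (t : ℕ) / n₂ ∧ (t : ℕ) / n₂ ≤ a + (s - 1) ∧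
      c ≤ (t : ℕ) % n₂ ∧ (t : ℕ) % n₂ ≤ c + (s - 1))).card ≤ s * s := by
  have hcard : ((Finset.Icc a (a + (s - 1))) ×ˢ (Finset.Icc c (c + (s - 1)))).card = s * s := by
    rw [Finset.card_product, Nat.card_Icc, Nat.card_Icc]
    have h1 : a + (s - 1) + 1 - a = s := by omega
    have h2 : c + (s - 1) + 1 - c = s := by omega
    rw [h1, h2]
  rw [← hcard]
  apply Finset.card_le_card_of_injOn (fun t : Fin n => ((t : ℕ) / n₂, (t : ℕ) % n₂))
  · intro t ht
    simp only [Finset.mem_coe, Finset.mem_filter] at ht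
    simp only [Finset.mem_coe, Finset.mem_product, Finset.mem_Icc]
    omega
  · intro t1 h1 t2 h2 hft
    have hd : (t1 : ℕ) / n₂ = (t2 : ℕ) / n₂ := congrArg Prod.fst hft
    have hmo : (t1 : ℕ) % n₂ = (t2 : ℕ) % n₂ := congrArg Prod.snd hft
    have e1 := Nat.div_add_mod (t1 : ℕ) n₂
    have e2 := Nat.div_add_mod (t2 : ℕ) n₂
    have : n₂ * ((t1 : ℕ) / n₂) = n₂ * ((t2 : ℕ) / n₂) := by rw [hd]
    exact Fin.ext (by omega)

/-- The two-dimensional expansion via the regular representation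
`ρ : E → Mat_{m×m}(F)` (matrix of multiplication by `a` w.r.t. a fixed basis `b`)
of a code `C ⊆ E^n` of minimum distance at least `n - k + 1` corrects any single
square burst of side at most `x = m(⌊√⌊(n-k)/2⌋⌋ - 1) + 1`. -/
theorem regular_expansion_corrects_single_square_burst
    {F E : Type*} [Field F] [Fintype F] [DecidableEq F]
    [Field E] [Algebra F E] [DecidableEq E]
    (m n n₁ n₂ k : ℕ) (b : Module.Basis (Fin m) F E)
    (ρ : E → Matrix (Fin m) (Fin m) F)
    (hρ : ρ = fun a => LinearMap.toMatrix b b (LinearMap.mulLeft F a))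
    (hn₁ : 0 < n₁) (hn₂ : 0 < n₂) (hn : n₁ * n₂ = n)
    (Φ₂ : (Fin n → E) → Matrix (Fin (n₁ * m)) (Fin (n₂ * m)) F)
    (hΦ : ∀ (x : Fin n → E) (r : Fin n₁) (c : Fin n₂) (u v : Fin m),
      Φ₂ x (finIdx r u) (finIdx c v) = ρ (x (Fin.cast hn (finIdx r c))) u v)
    (hk : 0 < k) (hkn : k < n)
    (hsq : 1 ≤ Nat.sqrt ((n - k) / 2))
    (C : Set (Fin n → E))
    (hC : ∀ c ∈ C, ∀ c' ∈ C, c ≠ c' → n - k + 1 ≤ hammingDist c c') :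
    ∀ c ∈ C, ∀ c' ∈ C, ∀ e e' : Matrix (Fin (n₁ * m)) (Fin (n₂ * m)) F,
      IsSquareBurst (m * (Nat.sqrt ((n - k) / 2) - 1) + 1) e →
      IsSquareBurst (m * (Nat.sqrt ((n - k) / 2) - 1) + 1) e' →
      Φ₂ c + e = Φ₂ c' + e' → c = c' := by
  intro c hc c' hc' e e' hbe hbe' heq
  by_contra hne
  obtain ⟨p, q, he⟩ := hbe
  obtain ⟨p', q', he'⟩ := hbe'
  set s := Nat.sqrt ((n - k) / 2) with hs
  -- m is positive
  have hmne : Nonempty (Fin m) := b.index_nonempty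
  have hm : 0 < m := Fin.pos hmne.some
  -- ρ is injective entrywise
  have hρinj : ∀ a a' : E, a ≠ a' → ∃ u v : Fin m, ρ a u v ≠ ρ a' u v := by
    intro a a' hne'
    by_contra hcon
    push_neg at hcon
    apply hne'
    have : ρ a = ρ a' := by ext u v; exact hcon u v
    rw [hρ] at this
    have h2 : LinearMap.mulLeft F a = LinearMap.mulLeft F a' :=
      (LinearMap.toMatrix b b).injective this
    have := congrArg (fun f : E →ₗ[F] E => f 1) h2
    simpa using this
  -- The key covering claim
  have hcover : ∀ t : Fin n, c t ≠ c' t →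
      (p / m ≤ (t : ℕ) / n₂ ∧ (t : ℕ) / n₂ ≤ p / m + (s - 1) ∧
       q / m ≤ (t : ℕ) % n₂ ∧ (t : ℕ) % n₂ ≤ q / m + (s - 1)) ∨
      (p' / m ≤ (t : ℕ) / n₂ ∧ (t : ℕ) / n₂ ≤ p' / m + (s - 1) ∧
       q' / m ≤ (t : ℕ) % n₂ ∧ (t : ℕ) % n₂ ≤ q' / m + (s - 1)) := by
    intro t hct
    have hrlt : (t : ℕ) / n₂ < n₁ := by
      apply Nat.div_lt_of_lt_mul
      rw [Nat.mul_comm, hn]; exact t.2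
    set r : Fin n₁ := ⟨(t : ℕ) / n₂, hrlt⟩
    set col : Fin n₂ := ⟨(t : ℕ) % n₂, Nat.mod_lt _ hn₂⟩
    have htt : Fin.cast hn (finIdx r col) = t := by
      apply Fin.ext
      simp only [Fin.coe_cast, finIdx, r, col]
      have := Nat.div_add_mod (t : ℕ) n₂
      have h2 : (t : ℕ) / n₂ * n₂ = n₂ * ((t : ℕ) / n₂) := Nat.mul_comm _ _
      omega
    obtain ⟨u, v, huv⟩ := hρinj (c t) (c' t) hct
    have hmain := congrFun (congrFun heq (finIdx r u)) (finIdx col v)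
    simp only [Matrix.add_apply] at hmain
    rw [hΦ, hΦ, htt] at hmain
    have hne2 : e (finIdx r u) (finIdx col v) ≠ 0 ∨ e' (finIdx r u) (finIdx col v) ≠ 0 := by
      by_contra hcon
      push_neg at hcon
      rw [hcon.1, hcon.2] at hmain
      simp at hmain
      exact huv hmain
    rcases hne2 with h | h
    · obtain ⟨a1, a2, a3, a4⟩ := he _ _ h
      simp only [finIdx] at a1 a2 a3 a4
      left
      obtain ⟨b1, b2⟩ := blockBound hm u.2 a1 a2
      obtain ⟨b3, b4⟩ := blockBound hm v.2 a3 a4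
      exact ⟨b1, b2, b3, b4⟩
    · obtain ⟨a1, a2, a3, a4⟩ := he' _ _ h
      simp only [finIdx] at a1 a2 a3 a4
      right
      obtain ⟨b1, b2⟩ := blockBound hm u.2 a1 a2
      obtain ⟨b3, b4⟩ := blockBound hm v.2 a3 a4
      exact ⟨b1, b2, b3, b4⟩
  -- Count
  have hdist := hC c hc c' hc' hne
  have hdisteq : hammingDist c c' = (Finset.univ.filter fun t => c t ≠ c' t).card := rfl
  have hsub : (Finset.univ.filter fun t => c t ≠ c' t) ⊆
      (Finset.univ.filter (fun t : Fin n =>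
        p / m ≤ (t : ℕ) / n₂ ∧ (t : ℕ) / n₂ ≤ p / m + (s - 1) ∧
        q / m ≤ (t : ℕ) % n₂ ∧ (t : ℕ) % n₂ ≤ q / m + (s - 1))) ∪
      (Finset.univ.filter (fun t : Fin n =>
        p' / m ≤ (t : ℕ) / n₂ ∧ (t : ℕ) / n₂ ≤ p' / m + (s - 1) ∧
        q' / m ≤ (t : ℕ) % n₂ ∧ (t : ℕ) % n₂ ≤ q' / m + (s - 1))) := by
    intro t ht
    simp only [Finset.mem_filter, Finset.mem_univ, true_and] at ht
    rcases hcover t ht with h | h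
    · exact Finset.mem_union_left _ (by simp [Finset.mem_filter, h])
    · exact Finset.mem_union_right _ (by simp [Finset.mem_filter, h])
  have hcard1 := burstCard n n₁ n₂ s hn (p / m) (q / m) hsq
  have hcard2 := burstCard n n₁ n₂ s hn (p' / m) (q' / m) hsq
  have hle : hammingDist c c' ≤ s * s + s * s := by
    rw [hdisteq]
    calc (Finset.univ.filter fun t => c t ≠ c' t).card
        ≤ _ := Finset.card_le_card hsub
      _ ≤ _ := Finset.card_union_le _ _
      _ ≤ s * s + s * s := Nat.add_le_add hcard1 hcard2
  have hss : s * s ≤ (n - k) / 2 := by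
    have := Nat.sqrt_le' ((n - k) / 2)
    simpa [hs, pow_two] using this
  omega
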